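/- Let H be the 3-edge path on 4 vertices whose edges are coloured blue, red, blue in this order along the path. Then the semi-inducibility constant λ_H equals 2^2/3^3 = 4/27. Moreover, almost extremal graphs are almost 1/3-regular: for every ε > 0 there exist δ > 0 and n₀ such that every simple graph G on n ≥ n₀ vertices with λ_H(G) ≥ λ_H − δ has at least (1 − ε)·n vertices whose degree lies between (1/3 − ε)·n and (1/3 + ε)·n. -/

import Mathlib

open Finset
open scoped Classical

/-- Number of embeddings into `G` of the 3-edge path `0-1-2-3` with edges coloured
blue, red, blue in this order: injections `f` with `f 0 f 1` a non-edge, `f 1 f 2` an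
edge, and `f 2 f 3` a non-edge of `G`. -/
noncomputable def numEmbBRB {n : ℕ} (G : SimpleGraph (Fin n)) : ℕ :=
  (Finset.univ.filter (fun f : Fin 4 → Fin n =>
    Function.Injective f ∧
    ¬ G.Adj (f 0) (f 1) ∧ G.Adj (f 1) (f 2) ∧ ¬ G.Adj (f 2) (f 3))).card

/-- `λ_H(G)` for the blue-red-blue path `H`: embedding count divided by `n(n−1)(n−2)(n−3)`. -/
noncomputable def lamBRB {n : ℕ} (G : SimpleGraph (Fin n)) : ℝ :=
  (numEmbBRB G : ℝ) / (n.descFactorial 4 : ℝ)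

/-- `λ_H(n)`: the maximum of `λ_H(G)` over all graphs on `n` vertices. -/
noncomputable def lamBRBmax (n : ℕ) : ℝ :=
  ⨆ G : SimpleGraph (Fin n), lamBRB G

/-! ### Auxiliary lemmas -/

lemma BRB.deg_le {n : ℕ} (G : SimpleGraph (Fin n)) (u : Fin n) : G.degree u ≤ n := by
  have := Finset.card_le_univ (G.neighborFinset u)
  rw [SimpleGraph.card_neighborFinset_eq_degree] at this
  simpa using this

lemma BRB.numEmb_le {n : ℕ} (G : SimpleGraph (Fin n)) :
    numEmbBRB G ≤ ∑ u : Fin n, ∑ v ∈ G.neighborFinset u,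
      (n - G.degree u) * (n - G.degree v) := by
  classical
  set s := (Finset.univ.filter (fun f : Fin 4 → Fin n =>
    Function.Injective f ∧
    ¬ G.Adj (f 0) (f 1) ∧ G.Adj (f 1) (f 2) ∧ ¬ G.Adj (f 2) (f 3))) with hs
  have hmap : ∀ f ∈ s, (f 1, f 2) ∈ (univ ×ˢ univ : Finset (Fin n × Fin n)) := by
    intro f _; simp
  rw [numEmbBRB, ← hs, Finset.card_eq_sum_card_fiberwise hmap]
  rw [Finset.sum_product]
  apply Finset.sum_le_sum
  intro u _
  rw [← Finset.sum_filter_add_sum_filter_not univ (fun v => G.Adj u v)]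
  have hzero : ∑ v ∈ univ.filter (fun v => ¬ G.Adj u v),
      (s.filter (fun f => (f 1, f 2) = (u, v))).card = 0 := by
    apply Finset.sum_eq_zero
    intro v hv
    simp only [mem_filter, mem_univ, true_and] at hv
    rw [Finset.card_eq_zero]
    ext f
    simp only [mem_filter, Finset.notMem_empty, iff_false, hs, mem_univ, true_and]
    rintro ⟨⟨_, _, hadj, _⟩, h12⟩
    obtain ⟨h1, h2⟩ := Prod.mk.injEq .. ▸ h12
    exact hv (h1 ▸ h2 ▸ hadj)
  have hnb : univ.filter (fun v => G.Adj u v) = G.neighborFinset u := by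
    ext v; simp [SimpleGraph.mem_neighborFinset]
  rw [hnb] at *
  rw [hzero, add_zero]
  apply Finset.sum_le_sum
  intro v hv
  set X : Fin n → Finset (Fin n) := fun w => univ.filter (fun x => ¬ G.Adj w x ∧ x ≠ w) with hX
  have hXcard : ∀ w, (X w).card ≤ n - G.degree w := by
    intro w
    have hsub : X w ⊆ (G.neighborFinset w)ᶜ := by
      intro x hx
      simp only [hX, mem_filter, mem_univ, true_and] at hx
      simp only [Finset.mem_compl, SimpleGraph.mem_neighborFinset]
      exact hx.1
    calc (X w).card ≤ ((G.neighborFinset w)ᶜ).card := Finset.card_le_card hsub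
      _ = n - G.degree w := by
          rw [Finset.card_compl, Fintype.card_fin, SimpleGraph.card_neighborFinset_eq_degree]
  calc (s.filter (fun f => (f 1, f 2) = (u, v))).card
      ≤ ((X u) ×ˢ (X v)).card := by
        apply Finset.card_le_card_of_injOn (fun f => (f 0, f 3))
        · intro f hf
          simp only [Finset.mem_coe, mem_filter, hs, mem_univ, true_and] at hf
          obtain ⟨⟨hinj, h01, h12, h23⟩, hfe⟩ := hf
          obtain ⟨h1, h2⟩ := Prod.mk.injEq .. ▸ hfe
          rw [← h1, ← h2]
          simp only [Finset.mem_coe, Finset.mem_product, hX, mem_filter, mem_univ, true_and]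
          refine ⟨⟨fun h => h01 h.symm, fun h => ?_⟩, ⟨h23, fun h => ?_⟩⟩
          · exact (by decide : (0 : Fin 4) ≠ 1) (hinj h)
          · exact (by decide : (3 : Fin 4) ≠ 2) (hinj h)
        · intro f hf g hg hfg
          simp only [Finset.mem_coe, Finset.mem_filter] at hf hg
          obtain ⟨h0, h3⟩ := Prod.mk.injEq .. ▸ hfg
          obtain ⟨hf1, hf2⟩ := Prod.mk.injEq .. ▸ hf.2
          obtain ⟨hg1, hg2⟩ := Prod.mk.injEq .. ▸ hg.2
          funext i
          fin_cases i
          · exact h0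
          · exact hf1.trans hg1.symm
          · exact hf2.trans hg2.symm
          · exact h3
      _ ≤ (n - G.degree u) * (n - G.degree v) := by
        rw [Finset.card_product]
        exact Nat.mul_le_mul (hXcard u) (hXcard v)

/-- The key upper-bound inequality: the number of embeddings plus an error term
measuring irregularity of degrees is at most `4/27 · n⁴`. -/
lemma BRB.key {n : ℕ} (G : SimpleGraph (Fin n)) :
    (numEmbBRB G : ℝ) + ((n:ℝ)/3) * ∑ u : Fin n, ((G.degree u : ℝ) - n/3)^2
      ≤ 4/27 * (n:ℝ)^4 := by
  classical
  set d : Fin n → ℝ := fun u => (G.degree u : ℝ) with hdd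
  have hd0 : ∀ u, 0 ≤ d u := fun u => Nat.cast_nonneg _
  have hdn : ∀ u, d u ≤ n := fun u => by
    simp only [hdd]; exact_mod_cast BRB.deg_le G u
  have h0 : (numEmbBRB G : ℝ) ≤
      (↑(∑ u : Fin n, ∑ v ∈ G.neighborFinset u,
        (n - G.degree u) * (n - G.degree v)) : ℝ) :=
    Nat.cast_le.2 (BRB.numEmb_le G)
  have hcast : (↑(∑ u : Fin n, ∑ v ∈ G.neighborFinset u,
      (n - G.degree u) * (n - G.degree v)) : ℝ)
      = ∑ u : Fin n, ∑ v ∈ G.neighborFinset u, ((n:ℝ) - d u) * ((n:ℝ) - d v) := by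
    rw [Nat.cast_sum]
    refine Finset.sum_congr rfl fun u _ => ?_
    rw [Nat.cast_sum]
    refine Finset.sum_congr rfl fun v _ => ?_
    rw [Nat.cast_mul, Nat.cast_sub (BRB.deg_le G u), Nat.cast_sub (BRB.deg_le G v)]
  rw [hcast] at h0
  have step1 : ∑ u : Fin n, ∑ v ∈ G.neighborFinset u, ((n:ℝ) - d u) * ((n:ℝ) - d v)
      ≤ ∑ u : Fin n, (d u) * ((n:ℝ) - d u)^2 := by
    have hle : ∑ u : Fin n, ∑ v ∈ G.neighborFinset u, 2 * (((n:ℝ) - d u) * ((n:ℝ) - d v))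
        ≤ ∑ u : Fin n, ∑ v ∈ G.neighborFinset u,
            (((n:ℝ) - d u)^2 + ((n:ℝ) - d v)^2) := by
      refine Finset.sum_le_sum fun u _ => Finset.sum_le_sum fun v _ => ?_
      nlinarith [sq_nonneg (d u - d v)]
    have hfac : ∑ u : Fin n, ∑ v ∈ G.neighborFinset u, 2 * (((n:ℝ) - d u) * ((n:ℝ) - d v))
        = 2 * ∑ u : Fin n, ∑ v ∈ G.neighborFinset u, ((n:ℝ) - d u) * ((n:ℝ) - d v) := by
      simp_rw [← Finset.mul_sum]
    have hswap : ∑ u : Fin n, ∑ v ∈ G.neighborFinset u, ((n:ℝ) - d v)^2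
        = ∑ u : Fin n, (d u) * ((n:ℝ) - d u)^2 := by
      rw [Finset.sum_comm' (t' := (univ : Finset (Fin n)))
        (s' := fun v => G.neighborFinset v)
        (fun u v => by simp [SimpleGraph.mem_neighborFinset, SimpleGraph.adj_comm])]
      refine Finset.sum_congr rfl fun v _ => ?_
      rw [Finset.sum_const, nsmul_eq_mul, SimpleGraph.card_neighborFinset_eq_degree]
    have hconst : ∑ u : Fin n, ∑ v ∈ G.neighborFinset u, ((n:ℝ) - d u)^2
        = ∑ u : Fin n, (d u) * ((n:ℝ) - d u)^2 := by
      refine Finset.sum_congr rfl fun u _ => ?_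
      rw [Finset.sum_const, nsmul_eq_mul, SimpleGraph.card_neighborFinset_eq_degree]
    have hsplit : ∑ u : Fin n, ∑ v ∈ G.neighborFinset u,
        (((n:ℝ) - d u)^2 + ((n:ℝ) - d v)^2)
        = (∑ u : Fin n, (d u) * ((n:ℝ) - d u)^2) + ∑ u : Fin n, (d u) * ((n:ℝ) - d u)^2 := by
      simp only [Finset.sum_add_distrib]
      rw [hswap, hconst]
    rw [hfac, hsplit] at hle
    linarith
  have step2 : ∑ u : Fin n, (d u) * ((n:ℝ) - d u)^2
      ≤ ∑ u : Fin n, (4/27 * (n:ℝ)^3 - (n:ℝ)/3 * ((d u) - n/3)^2) := by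
    refine Finset.sum_le_sum fun u _ => ?_
    nlinarith [mul_nonneg (sq_nonneg (d u - (n:ℝ)/3)) (sub_nonneg.2 (hdn u))]
  have htot : ∑ u : Fin n, (4/27 * (n:ℝ)^3 - (n:ℝ)/3 * ((d u) - n/3)^2)
      = 4/27 * (n:ℝ)^4 - ((n:ℝ)/3) * ∑ u : Fin n, ((d u) - n/3)^2 := by
    rw [Finset.sum_sub_distrib, Finset.sum_const, ← Finset.mul_sum]
    simp [Fintype.card_fin]
    ring
  have := (h0.trans step1).trans (step2.trans_eq htot)
  linarith

/-! ### The lower-bound construction: disjoint union of three cliques -/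

def BRB.G3 (n : ℕ) : SimpleGraph (Fin n) :=
  SimpleGraph.fromRel (fun x y => (x:ℕ) % 3 = (y:ℕ) % 3)

lemma BRB.G3_adj {n : ℕ} {x y : Fin n} :
    (BRB.G3 n).Adj x y ↔ x ≠ y ∧ (x:ℕ) % 3 = (y:ℕ) % 3 := by
  constructor
  · rintro ⟨h, h2 | h2⟩ <;> exact ⟨h, by omega⟩
  · rintro ⟨h, h2⟩; exact ⟨h, Or.inl h2⟩

noncomputable def BRB.cls (n c : ℕ) : Finset (Fin n) :=
  univ.filter (fun x : Fin n => (x:ℕ) % 3 = c)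

noncomputable def BRB.Xcls (n c : ℕ) : Finset (Fin n) :=
  univ.filter (fun x : Fin n => (x:ℕ) % 3 ≠ c)

lemma BRB.cls_card_ge {n c : ℕ} (hc : c < 3) : n / 3 ≤ (BRB.cls n c).card := by
  have := Finset.card_le_card_of_injOn
    (fun k : Fin (n/3) => (⟨3 * (k:ℕ) + c, by omega⟩ : Fin n))
    (s := univ) (t := BRB.cls n c)
    (fun k _ => by
      simp only [Finset.mem_coe, BRB.cls, Finset.mem_filter, Finset.mem_univ, true_and]
      omega)
    (fun a _ b _ h => by
      have : 3 * (a:ℕ) + c = 3 * (b:ℕ) + c := congrArg Fin.val h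
      exact Fin.ext (by omega))
  simpa using this

lemma BRB.cls_card_le {n c : ℕ} : (BRB.cls n c).card ≤ n / 3 + 1 := by
  have := Finset.card_le_card_of_injOn (fun x : Fin n => (x:ℕ) / 3)
    (s := BRB.cls n c) (t := Finset.range (n/3 + 1))
    (fun x _ => by
      simp only [Finset.mem_coe, Finset.mem_range]
      have := x.isLt
      omega)
    (fun a ha b hb h => by
      simp only [BRB.cls, Finset.mem_coe, Finset.mem_filter, Finset.mem_univ, true_and] at ha hb
      have h' : (a:ℕ) / 3 = (b:ℕ) / 3 := h
      exact Fin.ext (by omega))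
  simpa [Finset.card_range] using this

lemma BRB.Xcls_card_ge {n c : ℕ} : n - n/3 - 1 ≤ (BRB.Xcls n c).card := by
  have h := Finset.card_filter_add_card_filter_not
    (s := (univ : Finset (Fin n))) (p := fun x : Fin n => (x:ℕ) % 3 = c)
  have h2 : (BRB.cls n c).card ≤ n/3 + 1 := BRB.cls_card_le
  have : (BRB.cls n c).card + (BRB.Xcls n c).card = n := by
    simpa [BRB.cls, BRB.Xcls, Finset.card_univ] using h
  omega

lemma BRB.sq_sub_mono {a b : ℕ} (h : b ≤ a) : b * b - b ≤ a * a - a := by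
  have h1 : b * (b - 1) ≤ a * (a - 1) := Nat.mul_le_mul h (by omega)
  have e : ∀ a : ℕ, a * (a - 1) = a * a - a := fun a => by
    cases a with
    | zero => simp
    | succ k => rw [Nat.succ_sub_one, Nat.mul_succ, Nat.succ_mul, Nat.add_sub_cancel]
  rwa [e, e] at h1

lemma BRB.numEmb_G3_ge (n : ℕ) :
    3 * ((n/3) * (n/3) - n/3) * ((n - n/3 - 1) * (n - n/3 - 1) - (n - n/3 - 1))
      ≤ numEmbBRB (BRB.G3 n) := by
  classical
  set q := n / 3 with hq
  set m := n - n/3 - 1 with hm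
  set A := (univ : Finset (Fin 3)).sigma
    (fun c => ((BRB.cls n (c:ℕ)).offDiag ×ˢ (BRB.Xcls n (c:ℕ)).offDiag)) with hA
  have hcardA : 3 * (q * q - q) * (m * m - m) ≤ A.card := by
    rw [hA, Finset.card_sigma]
    have hterm : ∀ c : Fin 3, (q * q - q) * (m * m - m)
        ≤ ((BRB.cls n (c:ℕ)).offDiag ×ˢ (BRB.Xcls n (c:ℕ)).offDiag).card := by
      intro c
      rw [Finset.card_product, Finset.offDiag_card, Finset.offDiag_card]
      exact Nat.mul_le_mul (BRB.sq_sub_mono (BRB.cls_card_ge c.isLt))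
        (BRB.sq_sub_mono BRB.Xcls_card_ge)
    calc 3 * (q * q - q) * (m * m - m)
        = ∑ _c : Fin 3, (q * q - q) * (m * m - m) := by
          simp [Finset.sum_const, Finset.card_univ]; ring
      _ ≤ _ := Finset.sum_le_sum (fun c _ => hterm c)
  refine le_trans hcardA ?_
  apply Finset.card_le_card_of_injOn
    (fun p => ![p.2.2.1, p.2.1.1, p.2.1.2, p.2.2.2])
  · rintro ⟨c, ⟨⟨u, v⟩, ⟨x, y⟩⟩⟩ hp
    simp only [Finset.mem_coe, hA, Finset.mem_sigma, Finset.mem_product, Finset.mem_offDiag] at hp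
    obtain ⟨-, ⟨hu, hv, huv⟩, ⟨hx, hy, hxy⟩⟩ := hp
    simp only [BRB.cls, BRB.Xcls, Finset.mem_filter, Finset.mem_univ, true_and] at hu hv hx hy
    have hxu : x ≠ u := fun h => hx (h ▸ hu)
    have hxv : x ≠ v := fun h => hx (h ▸ hv)
    have hyu : y ≠ u := fun h => hy (h ▸ hu)
    have hyv : y ≠ v := fun h => hy (h ▸ hv)
    simp only [Finset.mem_coe, Finset.mem_filter, Finset.mem_univ, true_and]
    refine ⟨?_, ?_, ?_, ?_⟩
    · intro i j hij
      fin_cases i <;> fin_cases j <;>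
        simp_all [Matrix.cons_val_zero, Matrix.cons_val_one, Matrix.head_cons,
          Matrix.cons_val_two, Matrix.cons_val_three, Matrix.tail_cons]
    · show ¬ (BRB.G3 n).Adj x u
      rw [BRB.G3_adj]
      rintro ⟨-, h⟩; exact hx (h.trans hu)
    · show (BRB.G3 n).Adj u v
      rw [BRB.G3_adj]
      exact ⟨huv, hu.trans hv.symm⟩
    · show ¬ (BRB.G3 n).Adj v y
      rw [BRB.G3_adj]
      rintro ⟨-, h⟩; exact hy (h.symm.trans hv)
  · rintro ⟨c, ⟨⟨u, v⟩, ⟨x, y⟩⟩⟩ hp ⟨c', ⟨⟨u', v'⟩, ⟨x', y'⟩⟩⟩ hp' h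
    simp only [hA, Finset.mem_coe, Finset.mem_sigma, Finset.mem_product,
      Finset.mem_offDiag] at hp hp'
    obtain ⟨-, ⟨hu, -, -⟩, -⟩ := hp
    obtain ⟨-, ⟨hu', -, -⟩, -⟩ := hp'
    simp only [BRB.cls, Finset.mem_filter, Finset.mem_univ, true_and] at hu hu'
    have e0 : x = x' := congrFun h 0
    have e1 : u = u' := congrFun h 1
    have e2 : v = v' := congrFun h 2
    have e3 : y = y' := congrFun h 3
    have ec : c = c' := by
      have : (u:ℕ) % 3 = (u':ℕ) % 3 := by rw [e1]
      exact Fin.ext (by omega)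
    subst ec; subst e0; subst e1; subst e2; subst e3
    rfl

/-! ### Facts about the descending factorial -/

lemma BRB.desc_cast {n : ℕ} (h : 4 ≤ n) :
    ((n.descFactorial 4 : ℕ) : ℝ)
      = (n:ℝ) * ((n:ℝ) - 1) * ((n:ℝ) - 2) * ((n:ℝ) - 3) := by
  have e : n.descFactorial 4 = (n-3) * ((n-2) * ((n-1) * (n * 1))) := by
    simp [Nat.descFactorial]
  rw [e]
  rw [Nat.cast_mul, Nat.cast_mul, Nat.cast_mul, Nat.cast_mul,
    Nat.cast_sub (by omega), Nat.cast_sub (by omega), Nat.cast_sub (by omega)]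
  push_cast
  ring

lemma BRB.desc_pos {n : ℕ} (h : 4 ≤ n) : (0:ℝ) < (n.descFactorial 4 : ℝ) := by
  rw [BRB.desc_cast h]
  have hx : (4:ℝ) ≤ (n:ℝ) := by exact_mod_cast h
  have h0 : (0:ℝ) < (n:ℝ) := by linarith
  have h1 : (0:ℝ) < (n:ℝ) - 1 := by linarith
  have h2 : (0:ℝ) < (n:ℝ) - 2 := by linarith
  have h3 : (0:ℝ) < (n:ℝ) - 3 := by linarith
  exact mul_pos (mul_pos (mul_pos h0 h1) h2) h3

open Filter

lemma BRB.numEmb_le_real {n : ℕ} (G : SimpleGraph (Fin n)) :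
    (numEmbBRB G : ℝ) ≤ 4/27 * (n:ℝ)^4 := by
  have h := BRB.key G
  have h2 : 0 ≤ ((n:ℝ)/3) * ∑ u : Fin n, ((G.degree u : ℝ) - n/3)^2 := by
    apply mul_nonneg (by positivity)
    exact Finset.sum_nonneg fun u _ => sq_nonneg _
  linarith

lemma BRB.lamBRB_le {n : ℕ} (h : 4 ≤ n) (G : SimpleGraph (Fin n)) :
    lamBRB G ≤ 4/27 * (n:ℝ)^4 / (n.descFactorial 4 : ℝ) := by
  unfold lamBRB
  exact (div_le_div_iff_of_pos_right (BRB.desc_pos h)).2 (BRB.numEmb_le_real G)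

lemma BRB.lamBRBmax_le {n : ℕ} (h : 4 ≤ n) :
    lamBRBmax n ≤ 4/27 * (n:ℝ)^4 / (n.descFactorial 4 : ℝ) :=
  ciSup_le (BRB.lamBRB_le h)

lemma BRB.bdd (n : ℕ) : BddAbove (Set.range (fun G : SimpleGraph (Fin n) => lamBRB G)) :=
  Set.Finite.bddAbove (Set.finite_range _)

lemma BRB.lamBRBmax_ge (n : ℕ) (G : SimpleGraph (Fin n)) : lamBRB G ≤ lamBRBmax n :=
  le_ciSup (BRB.bdd n) G

set_option maxHeartbeats 1000000 in
lemma BRB.lower {n : ℕ} (h : 40 ≤ n) : 4/27 - 5/(n:ℝ) ≤ lamBRB (BRB.G3 n) := by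
  have h4 : 4 ≤ n := by omega
  have hx40 : (40:ℝ) ≤ (n:ℝ) := by exact_mod_cast h
  have hx0 : (0:ℝ) < (n:ℝ) := by linarith
  have hcount0 := BRB.numEmb_G3_ge n
  set q := n/3 with hq
  set m := n - n/3 - 1 with hm
  have hq11 : 11 ≤ q := by omega
  have hQ11 : (11:ℝ) ≤ (q:ℝ) := by exact_mod_cast hq11
  have h3q : 3*(q:ℝ) ≤ (n:ℝ) := by
    have : 3*q ≤ n := by omega
    exact_mod_cast this
  have hx3 : (n:ℝ) ≤ 3*(q:ℝ) + 2 := by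
    have : n ≤ 3*q + 2 := by omega
    exact_mod_cast this
  have hMge : 2*(q:ℝ) - 1 ≤ (m:ℝ) := by
    have h1 : 2*q - 1 ≤ m := by omega
    have h2 : 1 ≤ 2*q := by omega
    have h3 := (Nat.cast_le (α := ℝ)).2 h1
    rw [Nat.cast_sub h2] at h3
    push_cast at h3
    linarith
  have hE : ((3 * (q * q - q) * (m * m - m) : ℕ) : ℝ)
      = 3*((q:ℝ)*(q:ℝ) - (q:ℝ))*((m:ℝ)*(m:ℝ) - (m:ℝ)) := by
    have h1 : q ≤ q * q := Nat.le_mul_of_pos_left q (by omega)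
    have h2 : m ≤ m * m := Nat.le_mul_of_pos_left m (by omega)
    push_cast [Nat.cast_sub h1, Nat.cast_sub h2]
    ring
  have hcount : 3*((q:ℝ)*(q:ℝ) - (q:ℝ))*((m:ℝ)*(m:ℝ) - (m:ℝ)) ≤ (numEmbBRB (BRB.G3 n) : ℝ) := by
    rw [← hE]
    exact_mod_cast hcount0
  have hDpos := BRB.desc_pos h4
  rw [lamBRB, le_div_iff₀ hDpos, BRB.desc_cast h4]
  obtain ⟨N, hN⟩ : ∃ N : ℝ, N = (numEmbBRB (BRB.G3 n) : ℝ) := ⟨_, rfl⟩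
  rw [← hN] at hcount ⊢
  clear hN hE hcount0
  set x : ℝ := (n:ℝ)
  set Q : ℝ := (q:ℝ)
  set M : ℝ := (m:ℝ)
  have hD : x*(x-1)*(x-2)*(x-3) ≤ x^4 := by nlinarith [sq_nonneg x, sq_nonneg (x-1)]
  have hpos : 0 ≤ 4/27 - 5/x := by
    have : 5/x ≤ 5/40 := by
      apply div_le_div_of_nonneg_left (by norm_num) (by norm_num) hx40
    linarith
  have h1 : (4/27 - 5/x) * (x*(x-1)*(x-2)*(x-3)) ≤ (4/27 - 5/x) * x^4 :=
    mul_le_mul_of_nonneg_left hD hpos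
  have h2 : (4/27 - 5/x) * x^4 = 4/27*x^4 - 5*x^3 := by
    have : x ≠ 0 := by linarith
    field_simp
  have hx4 : x^4 ≤ (3*Q+2)^4 := by
    apply pow_le_pow_left₀ (by linarith) hx3
  have hx3' : 27*Q^3 ≤ x^3 := by
    have h5 : (3*Q)^3 ≤ x^3 := pow_le_pow_left₀ (by linarith) h3q 3
    nlinarith [h5]
  have hMM : (2*Q-1)*(2*Q-2) ≤ M*M - M := by
    nlinarith [mul_nonneg (sub_nonneg.2 hMge) (show (0:ℝ) ≤ M + 2*Q - 2 by linarith)]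
  have hQQ : 3*(Q*Q-Q)*((2*Q-1)*(2*Q-2)) ≤ 3*(Q*Q-Q)*(M*M-M) := by
    apply mul_le_mul_of_nonneg_left hMM
    nlinarith [hQ11]
  have hfinal : 4/27*(3*Q+2)^4 - 5*(27*Q^3) ≤ 3*(Q*Q-Q)*((2*Q-1)*(2*Q-2)) := by
    nlinarith [sq_nonneg Q, hQ11, mul_nonneg (sub_nonneg.2 hQ11) (sq_nonneg Q)]
  calc (4/27 - 5/x) * (x*(x-1)*(x-2)*(x-3)) ≤ (4/27 - 5/x) * x^4 := h1
    _ = 4/27*x^4 - 5*x^3 := h2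
    _ ≤ 4/27*(3*Q+2)^4 - 5*(27*Q^3) := by nlinarith [hx4, hx3']
    _ ≤ 3*(Q*Q-Q)*((2*Q-1)*(2*Q-2)) := hfinal
    _ ≤ 3*(Q*Q-Q)*(M*M-M) := hQQ
    _ ≤ N := hcount

lemma BRB.tendsto_lower :
    Tendsto (fun n : ℕ => 4/27 - 5/(n:ℝ)) atTop (nhds (4/27)) := by
  simpa using tendsto_const_nhds.sub (tendsto_const_div_atTop_nhds_zero_nat (5:ℝ))

lemma BRB.tendsto_upper :
    Tendsto (fun n : ℕ => 4/27 * (n:ℝ)^4 / (n.descFactorial 4 : ℝ)) atTop (nhds (4/27)) := by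
  have h1 : Tendsto (fun n : ℕ => (1:ℝ) - 1/n) atTop (nhds 1) := by
    simpa using tendsto_const_nhds.sub (tendsto_const_div_atTop_nhds_zero_nat (1:ℝ))
  have h2 : Tendsto (fun n : ℕ => (1:ℝ) - 2/n) atTop (nhds 1) := by
    simpa using tendsto_const_nhds.sub (tendsto_const_div_atTop_nhds_zero_nat (2:ℝ))
  have h3 : Tendsto (fun n : ℕ => (1:ℝ) - 3/n) atTop (nhds 1) := by
    simpa using tendsto_const_nhds.sub (tendsto_const_div_atTop_nhds_zero_nat (3:ℝ))
  have hg : Tendsto (fun n : ℕ =>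
      4/27 * (((1:ℝ)-1/n)⁻¹ * (((1:ℝ)-2/n)⁻¹ * ((1:ℝ)-3/n)⁻¹))) atTop (nhds (4/27)) := by
    have := (((h1.inv₀ one_ne_zero).mul
      ((h2.inv₀ one_ne_zero).mul (h3.inv₀ one_ne_zero)))).const_mul (4/27 : ℝ)
    simpa using this
  apply hg.congr'
  filter_upwards [eventually_ge_atTop 4] with n hn
  have hx : (4:ℝ) ≤ (n:ℝ) := by exact_mod_cast hn
  have h0 : (n:ℝ) ≠ 0 := by linarith
  have hh1 : (n:ℝ) - 1 ≠ 0 := by intro h; nlinarith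
  have hh2 : (n:ℝ) - 2 ≠ 0 := by intro h; nlinarith
  have hh3 : (n:ℝ) - 3 ≠ 0 := by intro h; nlinarith
  rw [BRB.desc_cast hn]
  have e1 : (1:ℝ) - 1/(n:ℝ) = ((n:ℝ)-1)/(n:ℝ) := by field_simp
  have e2 : (1:ℝ) - 2/(n:ℝ) = ((n:ℝ)-2)/(n:ℝ) := by field_simp
  have e3 : (1:ℝ) - 3/(n:ℝ) = ((n:ℝ)-3)/(n:ℝ) := by field_simp
  rw [e1, e2, e3]
  field_simp

set_option maxHeartbeats 2000000 in
theorem semi_inducibility_blue_red_blue_path :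
    Filter.Tendsto (fun n => lamBRBmax n) Filter.atTop (nhds (4/27)) ∧
    ∀ ε : ℝ, 0 < ε → ∃ δ : ℝ, 0 < δ ∧ ∃ n₀ : ℕ, ∀ n : ℕ, n₀ ≤ n →
      ∀ G : SimpleGraph (Fin n), 4/27 - δ ≤ lamBRB G →
        (1 - ε) * (n : ℝ) ≤
          ((Finset.univ.filter (fun u : Fin n =>
            (1/3 - ε) * (n : ℝ) ≤ (G.degree u : ℝ) ∧
            (G.degree u : ℝ) ≤ (1/3 + ε) * (n : ℝ))).card : ℝ) := by
  constructor
  · apply tendsto_of_tendsto_of_tendsto_of_le_of_le' BRB.tendsto_lower BRB.tendsto_upper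
    · filter_upwards [eventually_ge_atTop 40] with n hn
      exact (BRB.lower hn).trans (BRB.lamBRBmax_ge n _)
    · filter_upwards [eventually_ge_atTop 4] with n hn
      exact BRB.lamBRBmax_le hn
  · intro ε hε
    refine ⟨ε^3/6, by positivity, max 40 (⌈(6:ℝ)/ε^3⌉₊ + 1), ?_⟩
    intro n hn G hG
    have hn40 : 40 ≤ n := le_trans (le_max_left _ _) hn
    have h4 : 4 ≤ n := by omega
    have hx40 : (40:ℝ) ≤ (n:ℝ) := by exact_mod_cast hn40
    have hx0 : (0:ℝ) < (n:ℝ) := by linarith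
    have hxε : 6/ε^3 ≤ (n:ℝ) := by
      have h1 : (⌈(6:ℝ)/ε^3⌉₊ + 1 : ℕ) ≤ n := le_trans (le_max_right _ _) hn
      have h2 := Nat.le_ceil ((6:ℝ)/ε^3)
      have h3 : ((⌈(6:ℝ)/ε^3⌉₊ : ℕ) : ℝ) ≤ (n:ℝ) := by
        exact_mod_cast Nat.le_of_succ_le h1
      linarith
    have hε3x : 6 ≤ ε^3 * (n:ℝ) := by
      rw [div_le_iff₀ (by positivity)] at hxε
      linarith [hxε]
    have hkey := BRB.key G
    have hDpos := BRB.desc_pos h4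
    have hnum : (4/27 - ε^3/6) * ((n.descFactorial 4 : ℕ) : ℝ) ≤ (numEmbBRB G : ℝ) := by
      rw [lamBRB] at hG
      exact (le_div_iff₀ hDpos).1 hG
    have hdesc_le : ((n.descFactorial 4 : ℕ) : ℝ) ≤ (n:ℝ)^4 := by
      rw [BRB.desc_cast h4]; nlinarith [sq_nonneg (n:ℝ), hx40]
    have hdesc_ge : (n:ℝ)^4 - 6*(n:ℝ)^3 ≤ ((n.descFactorial 4 : ℕ) : ℝ) := by
      rw [BRB.desc_cast h4]; nlinarith [sq_nonneg (n:ℝ), hx40]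
    set S := ∑ u : Fin n, ((G.degree u : ℝ) - (n:ℝ)/3)^2 with hSdef
    have hδ0 : (0:ℝ) ≤ ε^3/6 := by positivity
    have hS : ((n:ℝ)/3) * S ≤ 8/9*(n:ℝ)^3 + (ε^3/6)*(n:ℝ)^4 := by
      have hmul := mul_le_mul_of_nonneg_left hdesc_le hδ0
      linarith [hkey, hnum, hmul, hdesc_ge]
    have hS' : S ≤ 8/3*(n:ℝ)^2 + (ε^3/2)*(n:ℝ)^3 := by
      have hh := mul_le_mul_of_nonneg_left hS
        (le_of_lt (show (0:ℝ) < 3/(n:ℝ) by positivity))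
      have e1 : (3/(n:ℝ)) * (((n:ℝ)/3)*S) = S := by
        field_simp
      have e2 : (3/(n:ℝ))*(8/9*(n:ℝ)^3 + ε^3/6*(n:ℝ)^4)
          = 8/3*(n:ℝ)^2 + ε^3/2*(n:ℝ)^3 := by
        field_simp; ring
      rw [e1, e2] at hh
      exact hh
    set P : Fin n → Prop := fun u =>
      (1/3 - ε) * (n:ℝ) ≤ (G.degree u : ℝ) ∧ (G.degree u : ℝ) ≤ (1/3 + ε) * (n:ℝ) with hP
    set B := univ.filter (fun u => ¬ P u) with hB
    have hBsum : (B.card : ℝ) * (ε*(n:ℝ))^2 ≤ S := by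
      have hterm : ∀ u ∈ B, (ε*(n:ℝ))^2 ≤ ((G.degree u : ℝ) - (n:ℝ)/3)^2 := by
        intro u hu
        simp only [hB, hP, Finset.mem_filter, Finset.mem_univ, true_and, not_and_or,
          not_le] at hu
        have hεn : 0 ≤ ε * (n:ℝ) := by positivity
        rcases hu with hu | hu
        · have a1 : 0 ≤ (n:ℝ)/3 - (G.degree u:ℝ) - ε*(n:ℝ) := by linarith
          have a2 : 0 ≤ (n:ℝ)/3 - (G.degree u:ℝ) + ε*(n:ℝ) := by linarith
          nlinarith [mul_nonneg a1 a2]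
        · have a1 : 0 ≤ (G.degree u:ℝ) - (n:ℝ)/3 - ε*(n:ℝ) := by linarith
          have a2 : 0 ≤ (G.degree u:ℝ) - (n:ℝ)/3 + ε*(n:ℝ) := by linarith
          nlinarith [mul_nonneg a1 a2]
      have h1 := Finset.card_nsmul_le_sum B
        (fun u => ((G.degree u : ℝ) - (n:ℝ)/3)^2) ((ε*(n:ℝ))^2) hterm
      rw [nsmul_eq_mul] at h1
      have h2 : ∑ u ∈ B, ((G.degree u : ℝ) - (n:ℝ)/3)^2 ≤ S := by
        apply Finset.sum_le_sum_of_subset_of_nonneg (Finset.subset_univ B)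
        intro u _ _
        exact sq_nonneg _
      linarith
    have hBle : (B.card : ℝ) ≤ ε * (n:ℝ) := by
      have hBpos : (0:ℝ) ≤ (B.card : ℝ) := Nat.cast_nonneg _
      nlinarith [hBsum, hS', hε3x, hε, hx0, mul_pos (mul_pos hε hε) (mul_pos hx0 hx0),
        mul_le_mul_of_nonneg_left hε3x (show (0:ℝ) ≤ (n:ℝ)^2/2 by positivity)]
    have hsplit : (univ.filter P).card + B.card = n := by
      have := Finset.card_filter_add_card_filter_not
        (s := (univ : Finset (Fin n))) (p := P)
      simpa [hB, Finset.card_univ] using this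
    have hcast : ((univ.filter P).card : ℝ) = (n:ℝ) - (B.card : ℝ) := by
      have : (univ.filter P).card = n - B.card := by omega
      rw [this, Nat.cast_sub (by omega)]
    calc (1 - ε) * (n:ℝ) = (n:ℝ) - ε * (n:ℝ) := by ring
      _ ≤ (n:ℝ) - (B.card : ℝ) := by linarith
      _ = ((univ.filter P).card : ℝ) := hcast.symm
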